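/- Let D be a canonical DBM over n clocks. Then the zone of the delay matrix D↑ is exactly the set of time-successors of the zone of D: ⟦D↑⟧ = {w : Fin (n+1) → ℝ | w 0 = 0 ∧ ∃ v ∈ ⟦D⟧, ∃ t ≥ 0, ∀ i ≠ 0, w i = v i + t}. -/

import Mathlib

/-- A DBM over `n` clocks: index `0` is the reference clock. -/
abbrev DBM (n : ℕ) := Fin (n + 1) → Fin (n + 1) → WithTop ℝ

/-- The zone of a DBM. -/
def Zone {n : ℕ} (D : DBM n) : Set (Fin (n + 1) → ℝ) :=
  {v | v 0 = 0 ∧ ∀ i j, ((v i - v j : ℝ) : WithTop ℝ) ≤ D i j}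

/-- A DBM is canonical if it satisfies the triangle inequality. -/
def Canonical {n : ℕ} (D : DBM n) : Prop :=
  ∀ i j k, D i j ≤ D i k + D k j

/-- The delay (time-elapse) matrix `D↑`: entries `(i, 0)` for `i ≠ 0` become `⊤`,
all other entries are unchanged. -/
def delay {n : ℕ} (D : DBM n) : DBM n :=
  fun i j => if i ≠ 0 ∧ j = 0 then ⊤ else D i j

/-- for a canonical DBM `D`, the zone of the delay matrix `D↑` is exactly
the set of time-successors of the zone of `D`. -/
theorem zone_delay_eq_time_successors {n : ℕ} (D : DBM n) (hD : Canonical D) :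
    Zone (delay D) =
      {w : Fin (n + 1) → ℝ | w 0 = 0 ∧
        ∃ v ∈ Zone D, ∃ t : ℝ, 0 ≤ t ∧ ∀ i, i ≠ 0 → w i = v i + t} := by
  ext w
  constructor
  · rintro ⟨hw0, hw⟩
    have hw' : ∀ i j : Fin (n+1), ¬(i ≠ 0 ∧ j = 0) →
        ((w i - w j : ℝ) : WithTop ℝ) ≤ D i j := by
      intro i j h
      have := hw i j
      rwa [delay, if_neg h] at this
    set f : Fin (n+1) → ℝ := fun i => w i - WithTop.untopD (w i) (D i 0) with hf
    set t : ℝ := max 0 (Finset.univ.sup' ⟨0, Finset.mem_univ 0⟩ f) with ht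
    have ht0 : 0 ≤ t := le_max_left _ _
    have htf : ∀ i, f i ≤ t := fun i =>
      le_trans (Finset.le_sup' f (Finset.mem_univ i)) (le_max_right _ _)
    refine ⟨hw0, fun i => if i = 0 then 0 else w i - t, ⟨if_pos rfl, ?_⟩, t, ht0, ?_⟩
    · intro i j
      by_cases hi : i = 0 <;> by_cases hj : j = 0
      · -- i = 0, j = 0
        subst hi; subst hj
        simp only [if_pos rfl, if_true]
        have h00 := hw' 0 0 (by simp)
        simpa [sub_self] using h00
      · -- i = 0, j ≠ 0
        subst hi
        simp only [if_pos rfl, if_true, if_neg hj]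
        cases hDj : D 0 j with
        | top => exact le_top
        | coe d =>
          have h0wd : 0 ≤ w j + d := by
            have h0j := hw' 0 j (by simp [hj])
            rw [hw0, hDj, WithTop.coe_le_coe] at h0j
            linarith
          have hle : t ≤ w j + d := by
            apply max_le h0wd
            apply Finset.sup'_le
            intro i _
            cases hDi : D i 0 with
              | top => simp [hf, hDi]; linarith
              | coe d' =>
                simp only [hf, hDi, WithTop.untopD_coe]
                have hij := hw' i j (by simp [hj])
                have htri := hD i j 0
                rw [hDi, hDj, ← WithTop.coe_add] at htri
                have := le_trans hij htri
                rw [WithTop.coe_le_coe] at this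
                linarith
          rw [WithTop.coe_le_coe]
          linarith
      · -- i ≠ 0, j = 0
        subst hj
        simp only [if_pos rfl, if_true, if_neg hi]
        cases hDi : D i 0 with
        | top => exact le_top
        | coe d =>
          have := htf i
          simp only [hf, hDi, WithTop.untopD_coe] at this
          rw [WithTop.coe_le_coe]
          linarith
      · -- i ≠ 0, j ≠ 0
        simp only [if_neg hi, if_neg hj]
        have hij := hw' i j (by simp [hj])
        have : w i - t - (w j - t) = w i - w j := by ring
        rw [this]
        exact hij
    · intro i hi
      simp only [if_neg hi]
      ring
  · rintro ⟨hw0, v, ⟨hv0, hv⟩, t, ht, hwt⟩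
    refine ⟨hw0, fun i j => ?_⟩
    rw [delay]
    split_ifs with h
    · exact le_top
    · by_cases hi : i = 0
      · by_cases hj : j = 0
        · subst hi hj
          simpa [sub_self] using (by simpa [sub_self, hv0] using hv 0 0)
        · subst hi
          have h0j := hv 0 j
          refine le_trans ?_ h0j
          rw [WithTop.coe_le_coe, hw0, hv0, hwt j hj]
          linarith
      · have hj : j ≠ 0 := fun hj => h ⟨hi, hj⟩
        have hij := hv i j
        refine le_trans ?_ hij
        rw [WithTop.coe_le_coe, hwt i hi, hwt j hj]
        linarith
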